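/- The number 2·5·7 = 70 is the only weird number of the form 2·p·q with p < q odd primes. -/
import Mathlib


/-- Sum of the positive divisors of `n`. -/
def sigma' (n : ℕ) : ℕ := ∑ d ∈ n.divisors, d

/-- `n` is abundant if `σ(n) > 2n`. -/
def Abundant (n : ℕ) : Prop := 2 * n < sigma' n

/-- `n` is pseudoperfect (in the weak sense) if some subset of its proper divisors sums to `n`. -/
def Pseudoperfect (n : ℕ) : Prop := ∃ s ⊆ n.properDivisors, ∑ d ∈ s, d = n

/-- `n` is weird if it is abundant and no subset of its proper divisors sums to `n`. -/
def Weird (n : ℕ) : Prop := Abundant n ∧ ¬ Pseudoperfect n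

lemma pseudo_iff (n : ℕ) : Pseudoperfect n ↔ ∃ s ∈ n.properDivisors.powerset, ∑ d ∈ s, d = n := by
  simp [Pseudoperfect, Finset.mem_powerset]

lemma sigma'_eq (n : ℕ) : sigma' n = ArithmeticFunction.sigma 1 n := by
  simp [sigma', ArithmeticFunction.sigma_one_apply]

lemma sigma'_mul {m n : ℕ} (h : Nat.Coprime m n) : sigma' (m * n) = sigma' m * sigma' n := by
  simp only [sigma'_eq]
  exact ArithmeticFunction.isMultiplicative_sigma.map_mul_of_coprime h

lemma sigma'_prime {p : ℕ} (hp : p.Prime) : sigma' p = p + 1 := by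
  rw [sigma', hp.divisors, Finset.sum_pair hp.one_lt.ne]
  omega

lemma pseudo_6q {q : ℕ} (hq : 3 ≤ q) : Pseudoperfect (2 * 3 * q) := by
  refine ⟨{q, 2*q, 3*q}, ?_, ?_⟩
  · intro d hd
    simp only [Finset.mem_insert, Finset.mem_singleton] at hd
    rw [Nat.mem_properDivisors]
    rcases hd with rfl | rfl | rfl
    · exact ⟨⟨6, by ring⟩, by omega⟩
    · exact ⟨⟨3, by ring⟩, by omega⟩
    · exact ⟨⟨2, by ring⟩, by omega⟩
  · rw [Finset.sum_insert (by simp; omega), Finset.sum_insert (by simp; omega),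
      Finset.sum_singleton]
    ring

theorem weird_2pq_unique :
    Weird (2 * 5 * 7) ∧
      ∀ p q : ℕ, p.Prime → q.Prime → Odd p → Odd q → p < q →
        Weird (2 * p * q) → p = 5 ∧ q = 7 := by
  constructor
  · constructor
    · show 2 * 70 < sigma' 70
      decide
    · rw [pseudo_iff]
      set_option maxRecDepth 10000 in decide
  · intro p q hp hq hop hoq hlt ⟨hab, hnp⟩
    have hp2 : p ≠ 2 := by rintro rfl; exact (Nat.not_odd_iff_even.mpr even_two) hop
    have hq2 : q ≠ 2 := by rintro rfl; exact (Nat.not_odd_iff_even.mpr even_two) hoq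
    have hp3 : 3 ≤ p := by have := hp.two_le; omega
    have hq3 : 3 ≤ q := by omega
    -- p ≠ 3: otherwise pseudoperfect
    have hpne3 : p ≠ 3 := by
      rintro rfl
      exact hnp (pseudo_6q hq3)
    obtain ⟨k, hk⟩ := hop
    obtain ⟨l, hl⟩ := hoq
    have hp5 : 5 ≤ p := by omega
    have hq7 : 7 ≤ q := by omega
    -- abundance inequality
    have hcpq : Nat.Coprime p q := (Nat.coprime_primes hp hq).mpr (by omega)
    have hc2p : Nat.Coprime 2 p := by
      simpa using (Nat.coprime_primes Nat.prime_two hp).mpr (by omega)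
    have hc2pq : Nat.Coprime (2 * p) q := by
      refine Nat.Coprime.mul ?_ hcpq
      simpa using (Nat.coprime_primes Nat.prime_two hq).mpr (by omega)
    have hs : sigma' (2 * p * q) = 3 * (p + 1) * (q + 1) := by
      rw [sigma'_mul hc2pq, sigma'_mul hc2p, sigma'_prime hp, sigma'_prime hq]
      have h2 : sigma' 2 = 3 := by decide
      rw [h2]
    have hab' : 2 * (2 * p * q) < 3 * (p + 1) * (q + 1) := by
      rw [← hs]; exact hab
    have key : p * q < 3 * p + 3 * q + 3 := by nlinarith [hab']
    have hp5' : p = 5 := by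
      by_contra h
      have hp7 : 7 ≤ p := by omega
      have hq9 : p + 2 ≤ q := by omega
      have : (p : ℤ) * q < 3 * p + 3 * q + 3 := by exact_mod_cast key
      have h7 : (7 : ℤ) ≤ p := by exact_mod_cast hp7
      have h9 : (p : ℤ) + 2 ≤ q := by exact_mod_cast hq9
      nlinarith
    subst hp5'
    omega
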